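/- For every δ ≥ 0, L ≥ 1, A ≥ 0 and ε > 0 there exists R > 0 such that for any δ-hyperbolic geodesic metric space X, any (L,A)-quasi-geodesic Φ : [0,T] → X, and any finite sequence of parameters 0 = t₀ < t₁ < ⋯ < t_s = T with t_i − t_{i−1} ≥ R for all i, one has ∑_{i=1}^s d_X(Φ(t_{i−1}), Φ(t_i)) ≥ d_X(Φ(0), Φ(T)) ≥ (1 − ε) ∑_{i=1}^s d_X(Φ(t_{i−1}), Φ(t_i)). -/

import Mathlib

open Set

/-- `X` is a geodesic metric space: any two points are joined by a geodesic segment. -/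
def GeodesicSpace (X : Type*) [MetricSpace X] : Prop :=
  ∀ x y : X, ∃ f : ℝ → X, f 0 = x ∧ f (dist x y) = y ∧
    ∀ s ∈ Icc (0 : ℝ) (dist x y), ∀ t ∈ Icc (0 : ℝ) (dist x y),
      dist (f s) (f t) = |s - t|

/-- Gromov hyperbolicity via the four-point condition. -/
def GromovHyperbolic (X : Type*) [MetricSpace X] (δ : ℝ) : Prop :=
  ∀ x y z w : X,
    dist x y + dist z w ≤ max (dist x z + dist y w) (dist x w + dist y z) + 2 * δ

/-- `Φ` is an `(L,A)`-quasi-geodesic on the interval `[0,T]`. -/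
def IsQuasiGeodesicOn {X : Type*} [MetricSpace X] (L A T : ℝ) (Φ : ℝ → X) : Prop :=
  ∀ s ∈ Icc (0 : ℝ) T, ∀ t ∈ Icc (0 : ℝ) T,
    (1 / L) * |s - t| - A ≤ dist (Φ s) (Φ t) ∧ dist (Φ s) (Φ t) ≤ L * |s - t| + A

namespace QGP

variable {X : Type*} [MetricSpace X]

/-- The Gromov product of `x` and `y` based at `w`. -/
noncomputable def gp (w x y : X) : ℝ := (dist w x + dist w y - dist x y) / 2

lemma gp_nonneg (w x y : X) : 0 ≤ gp w x y := by
  have := dist_triangle x w y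
  simp only [gp]
  rw [dist_comm x w] at this
  linarith

lemma gp_comm (w x y : X) : gp w x y = gp w y x := by
  simp only [gp]
  rw [dist_comm x y]
  ring

lemma gp_self_left (w y : X) : gp w w y = 0 := by
  simp [gp, dist_comm]

lemma gp_eq_zero_right (w x : X) : gp w x w = 0 := by
  simp [gp, dist_comm]

lemma dist_eq_gp (w x y : X) : dist x y = dist w x + dist w y - 2 * gp w x y := by
  simp only [gp]; ring

lemma gp_base_change (w w' x y : X) : gp w x y ≤ gp w' x y + dist w w' := by
  simp only [gp]
  have h1 := dist_triangle w' x w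
  have h2 := dist_triangle w' y w
  rw [dist_comm w' x, dist_comm x w] at h1
  rw [dist_comm w' y, dist_comm y w] at h2
  have h1' : dist w x ≤ dist w w' + dist w' x := by
    have := dist_triangle w w' x; linarith
  have h2' : dist w y ≤ dist w w' + dist w' y := by
    have := dist_triangle w w' y; linarith
  linarith

lemma gp_add_gp (w x y : X) : gp w x y + gp y x w = dist w y := by
  simp only [gp, dist_comm y x, dist_comm y w, dist_comm x w]
  ring

lemma gp_ge_of_far {w x y : X} {ρ d : ℝ} (hx : ρ ≤ dist w x) (hy : ρ ≤ dist w y)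
    (hd : dist x y ≤ d) : ρ - d / 2 ≤ gp w x y := by
  simp only [gp]; linarith

lemma hyp4 {δ : ℝ} (hh : GromovHyperbolic X δ) (w x y z : X) :
    min (gp w x y) (gp w y z) ≤ gp w x z + δ := by
  have h := hh x z y w
  rcases le_total (dist x y + dist z w) (dist x w + dist z y) with h' | h'
  · rw [max_eq_right h'] at h
    have : gp w y z ≤ gp w x z + δ := by
      simp only [gp]
      have hzy : dist z y = dist y z := dist_comm z y
      have hyw : dist y w = dist w y := dist_comm y w
      have hzw : dist z w = dist w z := dist_comm z w
      have hxw : dist x w = dist w x := dist_comm x w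
      linarith
    exact le_trans (min_le_right _ _) this
  · rw [max_eq_left h'] at h
    have : gp w x y ≤ gp w x z + δ := by
      simp only [gp]
      have hyw : dist y w = dist w y := dist_comm y w
      have hzw : dist z w = dist w z := dist_comm z w
      have hxw : dist x w = dist w x := dist_comm x w
      linarith
    exact le_trans (min_le_left _ _) this

/-- A chain of `n` steps from `x` to `y` whose consecutive Gromov products
based at `w` are all at least `c`. -/
def IsChain (w : X) (c : ℝ) (n : ℕ) (x y : X) : Prop :=
  ∃ z : ℕ → X, z 0 = x ∧ z n = y ∧ ∀ i < n, c ≤ gp w (z i) (z (i + 1))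

lemma IsChain.mono {w : X} {c c' : ℝ} {n : ℕ} {x y : X} (h : IsChain w c' n x y)
    (hc : c ≤ c') : IsChain w c n x y := by
  obtain ⟨z, h0, h1, h2⟩ := h
  exact ⟨z, h0, h1, fun i hi => le_trans hc (h2 i hi)⟩

lemma IsChain.trans {w : X} {c : ℝ} {m n : ℕ} {x y z : X}
    (h1 : IsChain w c m x y) (h2 : IsChain w c n y z) : IsChain w c (m + n) x z := by
  obtain ⟨z1, h10, h11, h12⟩ := h1
  obtain ⟨z2, h20, h21, h22⟩ := h2
  refine ⟨fun i => if i < m then z1 i else z2 (i - m), ?_, ?_, ?_⟩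
  · by_cases hm : 0 < m
    · simp only [if_pos hm]; exact h10
    · have hm0 : m = 0 := by omega
      subst hm0
      simp only [if_neg (lt_irrefl 0), Nat.sub_zero]
      rw [h20, ← h11, h10]
  · have : ¬ (m + n < m) := by omega
    simp only [this, if_false]
    simpa using h21
  · intro i hi
    by_cases hc1 : i + 1 < m
    · have hc0 : i < m := by omega
      simp only [hc0, hc1, if_true]
      exact h12 i (by omega)
    · by_cases hc0 : i < m
      · have him : i + 1 = m := by omega
        simp only [if_pos hc0, if_neg hc1]
        have hz0 : i + 1 - m = 0 := by omega
        rw [hz0, h20, ← h11, ← him]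
        exact h12 i (by omega)
      · simp only [if_neg hc0, if_neg hc1]
        have : i + 1 - m = (i - m) + 1 := by omega
        rw [this]
        exact h22 (i - m) (by omega)

lemma gp_chain_aux {δ : ℝ} (hδ : 0 ≤ δ) (hh : GromovHyperbolic X δ) (w : X) (c : ℝ) :
    ∀ (k n : ℕ) (z : ℕ → X), 1 ≤ n → n ≤ 2 ^ k →
      (∀ i < n, c ≤ gp w (z i) (z (i + 1))) → c - δ * k ≤ gp w (z 0) (z n) := by
  intro k
  induction k with
  | zero =>
    intro n z hn h2 hc
    have : n = 1 := by omega
    subst this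
    simpa using hc 0 (by omega)
  | succ k ih =>
    intro n z hn h2 hc
    by_cases hsmall : n ≤ 2 ^ k
    · have := ih n z hn hsmall hc
      have hk : δ * (k : ℝ) ≤ δ * ((k : ℕ) + 1 : ℕ) := by
        push_cast
        nlinarith
      have : c - δ * ((k : ℕ) + 1 : ℕ) ≤ c - δ * k := by push_cast at *; linarith
      linarith [ih n z hn hsmall hc]
    · push_neg at hsmall
      set m := 2 ^ k with hm
      have hmn : m < n := hsmall
      have hm1 : 1 ≤ m := Nat.one_le_two_pow
      have hnm : n - m ≤ 2 ^ k := by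
        have : n ≤ 2 ^ (k + 1) := h2
        have : n ≤ 2 * 2 ^ k := by rw [← pow_succ']; exact this
        omega
      have h1 := ih m z hm1 (le_refl _) (fun i hi => hc i (by omega))
      have h2' := ih (n - m) (fun i => z (m + i)) (by omega) hnm
        (fun i hi => by
          have := hc (m + i) (by omega)
          simpa [Nat.add_assoc] using this)
      have hz : m + (n - m) = n := by omega
      rw [hz] at h2'
      have h4 := hyp4 hh w (z 0) (z m) (z n)
      have hmin : c - δ * k ≤ min (gp w (z 0) (z m)) (gp w (z m) (z n)) :=
        le_min h1 h2'
      have : c - δ * k ≤ gp w (z 0) (z n) + δ := le_trans hmin h4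
      push_cast
      linarith

lemma gp_chain {δ : ℝ} (hδ : 0 ≤ δ) (hh : GromovHyperbolic X δ) {w x y : X} {c : ℝ}
    {n k : ℕ} (hn : 1 ≤ n) (h2 : n ≤ 2 ^ k) (hch : IsChain w c n x y) :
    c - δ * k ≤ gp w x y := by
  obtain ⟨z, h0, h1, hc⟩ := hch
  have := gp_chain_aux hδ hh w c k n z hn h2 hc
  rwa [h0, h1] at this


open Set

lemma mem_of_convex {S u v θ : ℝ} (hu : u ∈ Icc 0 S) (hv : v ∈ Icc 0 S)
    (hθ : θ ∈ Icc (0:ℝ) 1) : u + (v - u) * θ ∈ Icc 0 S := by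
  obtain ⟨hu0, hu1⟩ := hu
  obtain ⟨hv0, hv1⟩ := hv
  obtain ⟨h0, h1⟩ := hθ
  constructor <;> nlinarith

/-- From a coarsely-Lipschitz map whose image stays `ρ`-far from `w`, build a chain. -/
lemma chain_of_map (w : X) (g : ℝ → X) (S u v ρ Λ B : ℝ)
    (hu : u ∈ Icc 0 S) (hv : v ∈ Icc 0 S) (hΛ : 0 ≤ Λ)
    (hqb : ∀ a ∈ Icc 0 S, ∀ b ∈ Icc 0 S, dist (g a) (g b) ≤ Λ * |a - b| + B)
    (hfar : ∀ a ∈ Icc 0 S, ρ ≤ dist w (g a)) :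
    IsChain w (ρ - (Λ + B) / 2) (⌈|v - u|⌉₊ + 1) (g u) (g v) := by
  set n : ℕ := ⌈|v - u|⌉₊ + 1 with hn
  have hn0 : 0 < (n : ℝ) := by positivity
  have hvu : |v - u| ≤ (n : ℝ) := by
    have := Nat.le_ceil |v - u|
    have : (⌈|v - u|⌉₊ : ℝ) ≤ (n : ℝ) := by rw [hn]; push_cast; linarith
    linarith [Nat.le_ceil |v - u|]
  have hmem : ∀ j : ℕ, j ≤ n → u + (v - u) * (j / n) ∈ Icc 0 S := by
    intro j hj
    apply mem_of_convex hu hv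
    constructor
    · positivity
    · rw [div_le_one hn0]
      exact_mod_cast hj
  refine ⟨fun j => g (u + (v - u) * (j / n)), by simp, ?_, ?_⟩
  · show g (u + (v - u) * ((n : ℝ) / n)) = g v
    have : u + (v - u) * ((n : ℝ) / n) = v := by field_simp; ring
    rw [this]
  · intro i hi
    have hi1 : i + 1 ≤ n := hi
    have hmi := hmem i (by omega)
    have hmi1 := hmem (i + 1) hi1
    have hdist : dist (g (u + (v - u) * (i / n))) (g (u + (v - u) * ((i + 1 : ℕ) / n))) ≤ Λ + B := by
      have h := hqb _ hmi _ hmi1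
      have hc1 : ((i + 1 : ℕ) : ℝ) = (i : ℝ) + 1 := by push_cast; ring
      have key : (u + (v - u) * ((i : ℝ) / n)) - (u + (v - u) * (((i + 1 : ℕ) : ℝ) / n))
          = -((v - u) / n) := by
        rw [hc1]; field_simp; ring
      rw [key, abs_neg, abs_div, abs_of_pos hn0] at h
      have : Λ * (|v - u| / n) ≤ Λ * 1 := by
        apply mul_le_mul_of_nonneg_left _ hΛ
        rw [div_le_one hn0]; exact hvu
      linarith
    exact gp_ge_of_far (hfar _ hmi) (hfar _ hmi1) hdist

lemma nat_sq_le_two_pow : ∀ k : ℕ, 4 ≤ k → k ^ 2 ≤ 2 ^ k := by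
  intro k hk
  induction k, hk using Nat.le_induction with
  | base => norm_num
  | succ k hk ih =>
    have h1 : 2 * k + 1 ≤ k ^ 2 := by nlinarith
    have h2 : (k + 1) ^ 2 = k ^ 2 + (2 * k + 1) := by ring
    calc (k + 1) ^ 2 = k ^ 2 + (2 * k + 1) := h2
      _ ≤ 2 ^ k + 2 ^ k := by omega
      _ = 2 ^ (k + 1) := by ring

/-- Exponentials dominate linear functions: an explicit threshold. -/
lemma exp_lt (a b : ℝ) : ∃ K : ℕ, ∀ k : ℕ, (2 : ℝ) ^ k < a + b * k → k < K := by
  set M : ℕ := ⌈a⌉₊ + ⌈b⌉₊ + 1 with hM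
  refine ⟨4 * M + 4, ?_⟩
  intro k hk
  by_contra hcon
  push_neg at hcon
  have hM1 : 1 ≤ M := by omega
  have hk4 : 4 ≤ k := by omega
  have hkM : 4 * M ≤ k := by omega
  have hsq : ((k : ℝ)) ^ 2 ≤ 2 ^ k := by
    have := nat_sq_le_two_pow k hk4
    have h' : ((k ^ 2 : ℕ) : ℝ) ≤ ((2 ^ k : ℕ) : ℝ) := by exact_mod_cast this
    push_cast at h'
    exact h'
  have haM : a ≤ (M : ℝ) := by
    have := Nat.le_ceil a
    have h2 : (⌈a⌉₊ : ℝ) ≤ M := by exact_mod_cast (by omega : ⌈a⌉₊ ≤ M)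
    linarith
  have hbM : b ≤ (M : ℝ) := by
    have := Nat.le_ceil b
    have h2 : (⌈b⌉₊ : ℝ) ≤ M := by exact_mod_cast (by omega : ⌈b⌉₊ ≤ M)
    linarith
  have hkR : (4 : ℝ) * M ≤ k := by exact_mod_cast hkM
  have hk1 : (1 : ℝ) ≤ k := by
    have : (1 : ℕ) ≤ k := by omega
    exact_mod_cast this
  have hMpos : (0 : ℝ) < M := by exact_mod_cast hM1
  have hstep : a + b * k ≤ (M : ℝ) + M * k := by
    have : b * k ≤ (M : ℝ) * k := by
      apply mul_le_mul_of_nonneg_right hbM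
      linarith
    linarith
  have hstep2 : (M : ℝ) + M * k ≤ 2 * M * k := by nlinarith
  have hstep3 : 2 * (M : ℝ) * k ≤ k ^ 2 / 2 := by nlinarith
  have : (2 : ℝ) ^ k < 2 ^ k / 2 := by
    calc (2 : ℝ) ^ k < a + b * k := hk
      _ ≤ (M : ℝ) + M * k := hstep
      _ ≤ 2 * M * k := hstep2
      _ ≤ k ^ 2 / 2 := hstep3
      _ ≤ 2 ^ k / 2 := by linarith
  have hpos : (0 : ℝ) < 2 ^ k := by positivity
  linarith

set_option maxHeartbeats 1600000

/-- The Morse-type lemma: on a quasi-geodesic in a hyperbolic geodesic space, the Gromov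
product of the endpoints based at any intermediate point is uniformly bounded. -/
lemma morse (δ L A : ℝ) (hδ : 0 ≤ δ) (hL : 1 ≤ L) (hA : 0 ≤ A) :
    ∃ K : ℝ, 0 ≤ K ∧ ∀ (X : Type) [MetricSpace X], GeodesicSpace X → GromovHyperbolic X δ →
      ∀ (T : ℝ) (Φ : ℝ → X), 0 ≤ T → IsQuasiGeodesicOn L A T Φ →
        ∀ v ∈ Icc (0:ℝ) T, gp (Φ v) (Φ 0) (Φ T) ≤ K := by
  classical
  have hL0 : (0:ℝ) < L := by linarith
  set c₁ : ℝ := 6 * L + 2 with hc₁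
  set c₂ : ℝ := 6 * L + L * A + 8 with hc₂
  set c₃ : ℝ := 1 + (L + A) / 2 with hc₃
  obtain ⟨K₁, hK₁⟩ := exp_lt (2 * c₁ * c₃ + 2 * c₂) (2 * c₁ * δ)
  set D₀ : ℝ := c₃ + δ * K₁ with hD₀def
  have hc₃1 : (1:ℝ) ≤ c₃ := by rw [hc₃]; linarith
  have hD₀1 : (1:ℝ) ≤ D₀ := by
    have : (0:ℝ) ≤ δ * K₁ := by positivity
    rw [hD₀def]; linarith
  set J : ℝ := L * (2 * D₀ + 3 + A) with hJdef
  have hJ0 : 0 ≤ J := by rw [hJdef]; positivity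
  set K : ℝ := L * J + A + D₀ + 1 with hKdef
  have hK0 : (0:ℝ) ≤ K := by rw [hKdef]; positivity
  clear_value c₁ c₂ c₃ D₀ J K
  refine ⟨K, hK0, ?_⟩
  intro X _ hgeo hhyp T Φ hT hqg v hv
  obtain ⟨f, hf0, hfd, hfdist⟩ := hgeo (Φ 0) (Φ T)
  set d : ℝ := dist (Φ 0) (Φ T) with hddef
  have hd0 : 0 ≤ d := dist_nonneg
  -- the distance function from the geodesic to the quasi-geodesic
  set Sset : ℝ → Set ℝ := fun r => (fun u => dist (f r) (Φ u)) '' Icc 0 T with hSset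
  set h : ℝ → ℝ := fun r => sInf (Sset r) with hh
  have hSne : ∀ r, (Sset r).Nonempty := fun r => ⟨dist (f r) (Φ 0), ⟨0, ⟨le_refl 0, hT⟩, rfl⟩⟩
  have hSbdd : ∀ r, BddBelow (Sset r) := by
    intro r
    refine ⟨0, ?_⟩
    rintro x ⟨u, -, rfl⟩
    exact dist_nonneg
  have h_le : ∀ r, ∀ u ∈ Icc (0:ℝ) T, h r ≤ dist (f r) (Φ u) := by
    intro r u hu
    exact csInf_le (hSbdd r) ⟨u, hu, rfl⟩
  have h_nonneg : ∀ r, 0 ≤ h r := by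
    intro r
    apply le_csInf (hSne r)
    rintro x ⟨u, -, rfl⟩
    exact dist_nonneg
  have h_lip1 : ∀ r r', h r ≤ h r' + dist (f r) (f r') := by
    intro r r'
    have : h r - dist (f r) (f r') ≤ h r' := by
      apply le_csInf (hSne r')
      rintro x ⟨u, hu, rfl⟩
      have h1 : h r ≤ dist (f r) (Φ u) := h_le r u hu
      have h2 : dist (f r) (Φ u) ≤ dist (f r) (f r') + dist (f r') (Φ u) := dist_triangle _ _ _
      linarith
    linarith
  have hcont : ContinuousOn h (Icc 0 d) := by
    apply LipschitzOnWith.continuousOn (K := 1)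
    rw [lipschitzOnWith_iff_dist_le_mul]
    intro r hr r' hr'
    have hfe : dist (f r) (f r') = |r - r'| := hfdist r hr r' hr'
    have h1 := h_lip1 r r'
    have h2 := h_lip1 r' r
    rw [hfe] at h1
    rw [dist_comm (f r') (f r), hfe] at h2
    rw [Real.dist_eq, Real.dist_eq]
    push_cast
    rw [one_mul, abs_le]
    constructor <;> linarith
  obtain ⟨rs, hrs_mem, hrs_max'⟩ := isCompact_Icc.exists_isMaxOn
    ⟨0, left_mem_Icc.mpr hd0⟩ hcont
  have hrs_max : ∀ r ∈ Icc (0:ℝ) d, h r ≤ h rs := fun r hr => hrs_max' hr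
  have hfind : ∀ r b, h r < b → ∃ u, u ∈ Icc (0:ℝ) T ∧ dist (f r) (Φ u) < b := by
    intro r b hb
    obtain ⟨x, ⟨u, hu, rfl⟩, hx⟩ := exists_lt_of_csInf_lt (hSne r) hb
    exact ⟨u, hu, hx⟩
  clear_value h
  clear hcont hSne hSbdd h_lip1 hh hSset Sset
  set D : ℝ := h rs with hDdef
  have hD0 : 0 ≤ D := h_nonneg rs
  have hfar : ∀ u ∈ Icc (0:ℝ) T, D ≤ dist (f rs) (Φ u) := fun u hu => h_le rs u hu
  have hT_mem : T ∈ Icc (0:ℝ) T := ⟨hT, le_refl T⟩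
  have h0_mem : (0:ℝ) ∈ Icc (0:ℝ) T := ⟨le_refl 0, hT⟩
  have hDrs : D ≤ rs := by
    have h1 : D ≤ dist (f rs) (Φ 0) := hfar 0 h0_mem
    rw [← hf0] at h1
    rw [hfdist rs hrs_mem 0 (left_mem_Icc.mpr hd0)] at h1
    rw [abs_of_nonneg (by linarith only [hrs_mem.1])] at h1
    linarith only [h1]
  have hDdc : True := trivial
  have hDd : D ≤ d - rs := by
    have h1 : D ≤ dist (f rs) (Φ T) := hfar T hT_mem
    rw [← hfd] at h1
    rw [hfdist rs hrs_mem d (right_mem_Icc.mpr hd0)] at h1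
    rw [abs_of_nonpos (by linarith only [hrs_mem.2])] at h1
    linarith only [h1]
  clear_value D
  -- The key bound: D ≤ D₀
  have hDD₀ : D ≤ D₀ := by
    set ra : ℝ := max (rs - (2 * D + 2)) 0 with hradef
    set rb : ℝ := min (rs + (2 * D + 2)) d with hrbdef
    have hra_mem : ra ∈ Icc (0:ℝ) d :=
      ⟨le_max_right _ _, max_le (by linarith only [hrs_mem.2, hD0]) hd0⟩
    have hrb_mem : rb ∈ Icc (0:ℝ) d :=
      ⟨le_min (by linarith only [hrs_mem.1, hD0]) hd0, min_le_right _ _⟩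
    have hra_le : ra ≤ rs := max_le (by linarith only [hD0]) hrs_mem.1
    have hrb_ge : rs ≤ rb := le_min (by linarith only [hD0]) hrs_mem.2
    have hra_lb : rs - (2*D+2) ≤ ra := le_max_left _ _
    have hrb_ub : rb ≤ rs + (2*D+2) := min_le_left _ _
    -- choose u₁ near f ra and u₂ near f rb
    have hhra : h ra ≤ min D ra := by
      apply le_min (hrs_max ra hra_mem)
      have h1 : h ra ≤ dist (f ra) (Φ 0) := h_le ra 0 h0_mem
      rw [← hf0, hfdist ra hra_mem 0 (left_mem_Icc.mpr hd0),
        abs_of_nonneg (by linarith only [hra_mem.1] : (0:ℝ) ≤ ra - 0)] at h1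
      linarith only [h1]
    have hhrb : h rb ≤ min D (d - rb) := by
      apply le_min (hrs_max rb hrb_mem)
      have h1 : h rb ≤ dist (f rb) (Φ T) := h_le rb T hT_mem
      rw [← hfd, hfdist rb hrb_mem d (right_mem_Icc.mpr hd0),
        abs_of_nonpos (by linarith only [hrb_mem.2] : rb - d ≤ 0)] at h1
      linarith only [h1]
    obtain ⟨u₁, hu₁, hx₁⟩ := hfind ra (min D ra + 1) (lt_of_le_of_lt hhra (by linarith only []))
    obtain ⟨u₂, hu₂, hx₂⟩ := hfind rb (min D (d - rb) + 1) (lt_of_le_of_lt hhrb (by linarith only []))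
    obtain ⟨g₁, hg₁0, hg₁e, hg₁dist⟩ := hgeo (f ra) (Φ u₁)
    obtain ⟨g₂, hg₂0, hg₂e, hg₂dist⟩ := hgeo (Φ u₂) (f rb)
    set ℓ₁ : ℝ := dist (f ra) (Φ u₁) with hℓ₁def
    set ℓ₂ : ℝ := dist (Φ u₂) (f rb) with hℓ₂def
    have hℓ₁nn : 0 ≤ ℓ₁ := dist_nonneg
    have hℓ₂nn : 0 ≤ ℓ₂ := dist_nonneg
    have hℓ₁ub : ℓ₁ ≤ min D ra + 1 := le_of_lt hx₁
    have hℓ₂ub : ℓ₂ ≤ min D (d - rb) + 1 := by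
      rw [hℓ₂def, dist_comm]; exact le_of_lt hx₂
    have hℓ₁D : ℓ₁ ≤ D + 1 := le_trans hℓ₁ub (by linarith only [min_le_left D ra])
    have hℓ₂D : ℓ₂ ≤ D + 1 := le_trans hℓ₂ub (by linarith only [min_le_left D (d - rb)])
    have hkeyA : min D ra + D ≤ rs - ra := by
      rcases le_total rs (2*D+2) with hc | hc
      · have hra0 : ra = 0 := max_eq_right (by linarith only [hc, hD0])
        rw [hra0, min_eq_right hD0]
        simpa using hDrs
      · have hra0 : ra = rs - (2*D+2) := max_eq_left (by linarith only [hc, hD0])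
        rw [hra0]
        linarith only [min_le_left D (rs - (2*D+2))]
    have hkeyB : min D (d - rb) + D ≤ rb - rs := by
      rcases le_total (rs + (2*D+2)) d with hc | hc
      · have hrb0 : rb = rs + (2*D+2) := min_eq_left hc
        rw [hrb0]
        linarith only [min_le_left D (d - (rs + (2*D+2)))]
      · have hrb0 : rb = d := min_eq_right hc
        rw [hrb0, sub_self, min_eq_right hD0]
        linarith only [hDd]
    -- distances along the geodesic
    have e1 : dist (f rs) (f ra) = rs - ra := by
      rw [hfdist rs hrs_mem ra hra_mem, abs_of_nonneg (by linarith only [hra_le])]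
    have e2 : dist (f rs) (f rb) = rb - rs := by
      rw [hfdist rs hrs_mem rb hrb_mem, abs_of_nonpos (by linarith only [hrb_ge]), neg_sub]
    have e3 : dist (f ra) (f rb) = rb - ra := by
      rw [hfdist ra hra_mem rb hrb_mem, abs_of_nonpos (by linarith only [hra_le, hrb_ge]), neg_sub]
    set cc : ℝ := D - 1 - (L + A) / 2 with hccdef
    -- chain A : from f ra to Φ u₁ along the connector geodesic
    have chainA : IsChain (f rs) cc (⌈ℓ₁⌉₊ + 1) (f ra) (Φ u₁) := by
      have hfarA : ∀ a ∈ Icc (0:ℝ) ℓ₁, D - 1 ≤ dist (f rs) (g₁ a) := by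
        intro a ha
        have t1 : dist (f rs) (g₁ 0) ≤ dist (f rs) (g₁ a) + dist (g₁ a) (g₁ 0) :=
          dist_triangle _ _ _
        have t2 : dist (g₁ a) (g₁ 0) = a := by
          rw [hg₁dist a ha 0 (left_mem_Icc.mpr hℓ₁nn),
            abs_of_nonneg (by linarith only [ha.1]), sub_zero]
        rw [t2, hg₁0, e1] at t1
        linarith only [t1, ha.2, hℓ₁ub, hkeyA]
      have hch := chain_of_map (f rs) g₁ ℓ₁ 0 ℓ₁ (D - 1) 1 0
        (left_mem_Icc.mpr hℓ₁nn) (right_mem_Icc.mpr hℓ₁nn) (by norm_num)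
        (fun a ha b hb => by rw [hg₁dist a ha b hb]; norm_num)
        hfarA
      have hn : ⌈|ℓ₁ - 0|⌉₊ = ⌈ℓ₁⌉₊ := by rw [sub_zero, abs_of_nonneg hℓ₁nn]
      rw [hg₁0, hg₁e, hn] at hch
      exact hch.mono (by rw [hccdef]; linarith only [hL, hA])
    -- chain B : along the quasi-geodesic between u₁ and u₂
    have chainB : IsChain (f rs) cc (⌈|u₂ - u₁|⌉₊ + 1) (Φ u₁) (Φ u₂) := by
      have hch := chain_of_map (f rs) Φ T u₁ u₂ D L A hu₁ hu₂ (by linarith)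
        (fun a ha b hb => (hqg a ha b hb).2) hfar
      exact hch.mono (by rw [hccdef]; linarith only [])
    -- chain C : from Φ u₂ to f rb
    have chainC : IsChain (f rs) cc (⌈ℓ₂⌉₊ + 1) (Φ u₂) (f rb) := by
      have hfarC : ∀ a ∈ Icc (0:ℝ) ℓ₂, D - 1 ≤ dist (f rs) (g₂ a) := by
        intro a ha
        have t1 : dist (f rs) (g₂ ℓ₂) ≤ dist (f rs) (g₂ a) + dist (g₂ a) (g₂ ℓ₂) :=
          dist_triangle _ _ _
        have t2 : dist (g₂ a) (g₂ ℓ₂) = ℓ₂ - a := by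
          rw [hg₂dist a ha ℓ₂ (right_mem_Icc.mpr hℓ₂nn),
            abs_of_nonpos (by linarith only [ha.2]), neg_sub]
        rw [t2, hg₂e, e2] at t1
        linarith only [t1, ha.1, hℓ₂ub, hkeyB]
      have hch := chain_of_map (f rs) g₂ ℓ₂ 0 ℓ₂ (D - 1) 1 0
        (left_mem_Icc.mpr hℓ₂nn) (right_mem_Icc.mpr hℓ₂nn) (by norm_num)
        (fun a ha b hb => by rw [hg₂dist a ha b hb]; norm_num)
        hfarC
      have hn : ⌈|ℓ₂ - 0|⌉₊ = ⌈ℓ₂⌉₊ := by rw [sub_zero, abs_of_nonneg hℓ₂nn]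
      rw [hg₂0, hg₂e, hn] at hch
      exact hch.mono (by rw [hccdef]; linarith only [hL, hA])
    have chainAll := (chainA.trans chainB).trans chainC
    set N : ℕ := ⌈ℓ₁⌉₊ + 1 + (⌈|u₂ - u₁|⌉₊ + 1) + (⌈ℓ₂⌉₊ + 1) with hNdef
    clear_value N
    have hN1 : 1 ≤ N := by omega
    have hgp0 : gp (f rs) (f ra) (f rb) = 0 := by
      simp only [gp]
      rw [e1, e2, e3]; ring
    have hchain := gp_chain hδ hhyp hN1 (Nat.le_pow_clog one_lt_two N) chainAll
    rw [hgp0] at hchain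
    have hDk : D ≤ c₃ + δ * (Nat.clog 2 N : ℕ) := by
      rw [hc₃]
      rw [hccdef] at hchain
      push_cast at hchain ⊢
      linarith only [hchain]
    -- bound N linearly in D
    have hu12 : |u₂ - u₁| ≤ L * (dist (Φ u₁) (Φ u₂) + A) := by
      have hlow := (hqg u₁ hu₁ u₂ hu₂).1
      rw [abs_sub_comm u₁ u₂] at hlow
      have h' : (1/L) * |u₂ - u₁| ≤ dist (Φ u₁) (Φ u₂) + A := by linarith only [hlow]
      calc |u₂ - u₁| = L * ((1/L) * |u₂ - u₁|) := by field_simp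
        _ ≤ L * (dist (Φ u₁) (Φ u₂) + A) := mul_le_mul_of_nonneg_left h' (le_of_lt hL0)
    have hd12 : dist (Φ u₁) (Φ u₂) ≤ 6 * D + 6 := by
      have t1 : dist (Φ u₁) (Φ u₂) ≤ dist (Φ u₁) (f ra) + dist (f ra) (f rb)
          + dist (f rb) (Φ u₂) := dist_triangle4 _ _ _ _
      rw [dist_comm (Φ u₁) (f ra), dist_comm (f rb) (Φ u₂), e3] at t1
      have hba : rb - ra ≤ 4*D + 4 := by linarith only [hra_lb, hrb_ub]
      rw [← hℓ₁def, ← hℓ₂def] at t1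
      linarith only [t1, hba, hℓ₁D, hℓ₂D]
    have hNR : (N : ℝ) ≤ c₁ * D + c₂ := by
      have b₁ : (⌈ℓ₁⌉₊ : ℝ) < ℓ₁ + 1 := Nat.ceil_lt_add_one hℓ₁nn
      have b₂ : (⌈|u₂ - u₁|⌉₊ : ℝ) < |u₂ - u₁| + 1 := Nat.ceil_lt_add_one (abs_nonneg _)
      have b₃ : (⌈ℓ₂⌉₊ : ℝ) < ℓ₂ + 1 := Nat.ceil_lt_add_one hℓ₂nn
      have hu' : |u₂ - u₁| ≤ L * (6*D + 6 + A) :=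
        le_trans hu12 (mul_le_mul_of_nonneg_left (by linarith only [hd12]) (le_of_lt hL0))
      have hexp : L * (6*D+6+A) = 6*(L*D) + 6*L + L*A := by ring
      have hLD : D ≤ L * D := le_mul_of_one_le_left hD0 hL
      have expand : (6*L+2)*D + (6*L+L*A+8) = 6*(L*D) + 2*D + 6*L + L*A + 8 := by ring
      rw [hNdef, hc₁, hc₂]
      push_cast
      linarith only [b₁, b₂, b₃, hu', hexp, hLD, hℓ₁D, hℓ₂D, expand]
    -- extract the bound on D
    rcases Nat.lt_or_ge N 2 with hN2 | hN2
    · have hNone : N = 1 := by omega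
      rw [hNone] at hDk
      simp only [Nat.clog_one_right, Nat.cast_zero, mul_zero, add_zero] at hDk
      have hpos : (0:ℝ) ≤ δ * (K₁:ℝ) := by positivity
      rw [hD₀def]; linarith only [hDk, hpos]
    · have hpred : 2 ^ (Nat.clog 2 N - 1) < N :=
        Nat.pow_pred_clog_lt_self one_lt_two (show 1 < N by omega)
      set k := Nat.clog 2 N with hkdef
      have hk1 : 1 ≤ k := Nat.clog_pos one_lt_two hN2
      clear_value k
      have h2k : (2:ℕ) ^ k < 2 * N := by
        have hk' : k = (k-1) + 1 := by omega
        rw [hk', pow_succ]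
        omega
      have h2kR : (2:ℝ) ^ k < 2 * (N:ℝ) := by exact_mod_cast h2k
      have hc₁0 : (0:ℝ) ≤ c₁ := by rw [hc₁]; linarith only [hL]
      have hlin : (2:ℝ)^k < 2*c₁*c₃ + 2*c₂ + 2*c₁*δ*(k:ℕ) := by
        have e : 2*(c₁*D + c₂) ≤ 2*c₁*c₃ + 2*c₂ + 2*c₁*δ*(k:ℕ) := by
          have hm := mul_le_mul_of_nonneg_left hDk hc₁0
          linarith only [hm]
        calc (2:ℝ)^k < 2*(N:ℝ) := h2kR
          _ ≤ 2*(c₁*D + c₂) := by linarith only [hNR]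
          _ ≤ _ := e
      have hkK : k < K₁ := hK₁ k hlin
      have hkKR : (k:ℝ) ≤ (K₁:ℝ) := by exact_mod_cast le_of_lt hkK
      have hmul : δ * (k:ℝ) ≤ δ * (K₁:ℝ) := mul_le_mul_of_nonneg_left hkKR hδ
      rw [hD₀def]
      linarith only [hDk, hmul]
  -- every point of the geodesic is within D₀ + 1 of the quasi-geodesic
  have claim1 : ∀ r ∈ Icc (0:ℝ) d, ∃ u, u ∈ Icc (0:ℝ) T ∧ dist (f r) (Φ u) ≤ D₀ + 1 := by
    intro r hr
    have hrb : h r < D₀ + 1 := lt_of_le_of_lt (le_trans (hrs_max r hr) hDD₀) (by linarith only [])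
    obtain ⟨u, hu, hx⟩ := hfind r (D₀ + 1) hrb
    exact ⟨u, hu, le_of_lt hx⟩
  -- the walk along the geodesic transfers the bound to every point of the quasi-geodesic
  set m : ℕ := ⌈d⌉₊ + 1 with hmdef
  have hm1 : 1 ≤ m := by omega
  have hdm : d ≤ (m:ℝ) := by
    rw [hmdef]; push_cast; linarith only [Nat.le_ceil d]
  set r : ℕ → ℝ := fun j => min (j:ℝ) d with hrdef
  have hr_mem : ∀ j : ℕ, r j ∈ Icc (0:ℝ) d := by
    intro j
    exact ⟨le_min (by positivity) hd0, min_le_right _ _⟩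
  have hr0 : r 0 = 0 := by
    show min ((0:ℕ):ℝ) d = 0
    rw [Nat.cast_zero, min_eq_left hd0]
  have hrm : ∀ j, m ≤ j → r j = d := by
    intro j hj
    show min ((j:ℕ):ℝ) d = d
    apply min_eq_right
    calc d ≤ (m:ℝ) := hdm
      _ ≤ (j:ℝ) := by exact_mod_cast hj
  have hrstep : ∀ j : ℕ, |r j - r (j+1)| ≤ 1 := by
    intro j
    show |min ((j:ℕ):ℝ) d - min (((j+1:ℕ)):ℝ) d| ≤ 1
    have hj1 : (((j+1:ℕ)):ℝ) = (j:ℝ) + 1 := by push_cast; ring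
    rw [hj1, abs_le]
    rcases le_total ((j:ℝ) + 1) d with hc | hc
    · rw [min_eq_left (le_trans (by linarith only []) hc), min_eq_left hc]
      constructor <;> linarith only []
    · rw [min_eq_right hc]
      rcases le_total (j:ℝ) d with hc2 | hc2
      · rw [min_eq_left hc2]
        constructor <;> linarith only [hc, hc2]
      · rw [min_eq_right hc2]
        constructor <;> linarith only [hc, hc2]
  have hex : ∀ j : ℕ, ∃ u, u ∈ Icc (0:ℝ) T ∧ dist (f (r j)) (Φ u) ≤ D₀ + 1 :=
    fun j => claim1 (r j) (hr_mem j)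
  choose uu huumem huudist using hex
  set u' : ℕ → ℝ := fun j => if j = 0 then 0 else if m ≤ j then T else uu j with hu'def
  have hu'mem : ∀ j, u' j ∈ Icc (0:ℝ) T := by
    intro j
    show (if j = 0 then 0 else if m ≤ j then T else uu j) ∈ Icc (0:ℝ) T
    split
    · exact ⟨le_refl 0, hT⟩
    · split
      · exact ⟨hT, le_refl T⟩
      · exact huumem j
  have hu'dist : ∀ j, dist (f (r j)) (Φ (u' j)) ≤ D₀ + 1 := by
    intro j
    show dist (f (r j)) (Φ (if j = 0 then 0 else if m ≤ j then T else uu j)) ≤ D₀ + 1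
    split
    · rename_i hj
      subst hj
      rw [hr0, hf0, dist_self]
      linarith only [hD₀1]
    · split
      · rename_i h0 hm'
        rw [hrm j hm', hfd, dist_self]
        linarith only [hD₀1]
      · exact huudist j
  have hu'0 : u' 0 = 0 := by
    show (if 0 = 0 then (0:ℝ) else if m ≤ 0 then T else uu 0) = 0
    rw [if_pos rfl]
  have hu'm : u' m = T := by
    show (if m = 0 then (0:ℝ) else if m ≤ m then T else uu m) = T
    rw [if_neg (by omega), if_pos (le_refl m)]
  have hstep : ∀ j : ℕ, |u' (j+1) - u' j| ≤ J := by
    intro j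
    have hlow := (hqg (u' j) (hu'mem j) (u' (j+1)) (hu'mem (j+1))).1
    rw [abs_sub_comm (u' j) (u' (j+1))] at hlow
    have t1 : dist (Φ (u' j)) (Φ (u' (j+1))) ≤ (D₀+1) + 1 + (D₀+1) := by
      have tri : dist (Φ (u' j)) (Φ (u' (j+1))) ≤ dist (Φ (u' j)) (f (r j))
          + dist (f (r j)) (f (r (j+1))) + dist (f (r (j+1))) (Φ (u' (j+1))) :=
        dist_triangle4 _ _ _ _
      have e : dist (f (r j)) (f (r (j+1))) = |r j - r (j+1)| :=
        hfdist _ (hr_mem j) _ (hr_mem (j+1))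
      rw [dist_comm (Φ (u' j)) (f (r j)), e] at tri
      linarith only [tri, hu'dist j, hu'dist (j+1), hrstep j]
    have h2 : (1/L) * |u' (j+1) - u' j| ≤ (2*D₀ + 3) + A := by
      linarith only [hlow, t1]
    rw [hJdef]
    calc |u' (j+1) - u' j| = L * ((1/L) * |u' (j+1) - u' j|) := by field_simp
      _ ≤ L * (2*D₀ + 3 + A) :=
        mul_le_mul_of_nonneg_left (by linarith only [h2]) (le_of_lt hL0)
  set P : ℕ → Prop := fun j => u' j ≤ v with hPdef
  have hP0 : P 0 := by
    show u' 0 ≤ v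
    rw [hu'0]; exact hv.1
  set js := Nat.findGreatest P m with hjsdef
  have hjsm : js ≤ m := Nat.findGreatest_le m
  have hjs_le : u' js ≤ v := Nat.findGreatest_spec (Nat.zero_le m) hP0
  by_cases hjm : js = m
  · have hvT : v = T := le_antisymm hv.2 (by rw [← hu'm, ← hjm]; exact hjs_le)
    rw [hvT, gp_eq_zero_right]
    exact hK0
  · have hnot : ¬ P (js + 1) := Nat.findGreatest_is_greatest (n := m) (by omega) (by omega)
    have hvlt : v < u' (js + 1) := by
      have : ¬ (u' (js + 1) ≤ v) := hnot
      linarith only [lt_of_not_ge this]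
    have hvd : |v - u' js| ≤ J := by
      have hJle : u' (js+1) - u' js ≤ J := le_trans (le_abs_self _) (hstep js)
      rw [abs_of_nonneg (by linarith only [hjs_le])]
      linarith only [hvlt, hJle]
    have hdist1 : dist (Φ v) (Φ (u' js)) ≤ L * J + A := by
      have hup := (hqg v hv (u' js) (hu'mem js)).2
      have hmul : L * |v - u' js| ≤ L * J :=
        mul_le_mul_of_nonneg_left hvd (le_of_lt hL0)
      linarith only [hup, hmul]
    have hdist2 : dist (Φ v) (f (r js)) ≤ L * J + A + (D₀ + 1) := by
      have tri := dist_triangle (Φ v) (Φ (u' js)) (f (r js))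
      have h2 := hu'dist js
      rw [dist_comm (f (r js)) (Φ (u' js))] at h2
      linarith only [tri, hdist1, h2]
    have hgeo0 : gp (f (r js)) (Φ 0) (Φ T) = 0 := by
      have ea : dist (f (r js)) (Φ 0) = r js := by
        rw [← hf0, hfdist _ (hr_mem js) 0 (left_mem_Icc.mpr hd0),
          abs_of_nonneg (by linarith only [(hr_mem js).1]), sub_zero]
      have eb : dist (f (r js)) (Φ T) = d - r js := by
        rw [← hfd, hfdist _ (hr_mem js) d (right_mem_Icc.mpr hd0),
          abs_of_nonpos (by linarith only [(hr_mem js).2]), neg_sub]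
      simp only [gp]
      rw [ea, eb, ← hddef]
      ring
    have hbc := gp_base_change (Φ v) (f (r js)) (Φ 0) (Φ T)
    rw [hgeo0] at hbc
    rw [hKdef]
    linarith only [hbc, hdist2]


end QGP

set_option maxHeartbeats 1600000 in
/-- For all δ ≥ 0, L ≥ 1, A ≥ 0, ε > 0 there is R > 0 such that for any δ-hyperbolic
geodesic space, any (L,A)-quasi-geodesic Φ : [0,T] → X and any partition
0 = t₀ < t₁ < ⋯ < t_s = T with gaps at least R, the sum of the distances between
consecutive points approximates the distance between the endpoints up to factor 1-ε. -/
theorem stmt0 (δ L A ε : ℝ) (hδ : 0 ≤ δ) (hL : 1 ≤ L) (hA : 0 ≤ A) (hε : 0 < ε) :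
    ∃ R : ℝ, 0 < R ∧
      ∀ (X : Type) [MetricSpace X], GeodesicSpace X → GromovHyperbolic X δ →
        ∀ (T : ℝ) (Φ : ℝ → X), IsQuasiGeodesicOn L A T Φ →
          ∀ (s : ℕ) (t : ℕ → ℝ), 0 < s → t 0 = 0 → t s = T →
            (∀ i : ℕ, i < s → t i < t (i + 1)) →
            (∀ i : ℕ, i < s → R ≤ t (i + 1) - t i) →
            (∀ i : ℕ, i ≤ s → t i ∈ Icc (0 : ℝ) T) →
            dist (Φ 0) (Φ T) ≤ ∑ i ∈ Finset.range s, dist (Φ (t i)) (Φ (t (i + 1))) ∧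
            (1 - ε) * ∑ i ∈ Finset.range s, dist (Φ (t i)) (Φ (t (i + 1))) ≤
              dist (Φ 0) (Φ T) := by
  classical
  have hL0 : (0:ℝ) < L := by linarith
  obtain ⟨K, hK0, hK⟩ := QGP.morse δ L A hδ hL hA
  have hKδ : (0:ℝ) ≤ K + δ := by linarith
  have hfrac : (0:ℝ) ≤ 2*(K+δ)/ε := by positivity
  set R : ℝ := L * (A + 1 + 2*(K+δ) + 2*(K+δ)/ε) with hRdef
  have hR0 : 0 < R := by
    rw [hRdef]
    have : (0:ℝ) < A + 1 + 2*(K+δ) + 2*(K+δ)/ε := by linarith only [hA, hKδ, hfrac]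
    positivity
  refine ⟨R, hR0, ?_⟩
  intro X _ hgeo hhyp T Φ hqg s t hs ht0 hts hlt hgap hmem
  have hΦ0 : Φ 0 = Φ (t 0) := by rw [ht0]
  have hΦT : Φ T = Φ (t s) := by rw [hts]
  have hsum1 : dist (Φ 0) (Φ T) ≤ ∑ i ∈ Finset.range s, dist (Φ (t i)) (Φ (t (i+1))) := by
    rw [hΦ0, hΦT]
    exact dist_le_range_sum_dist (fun i => Φ (t i)) s
  -- each step of the partition is long
  have hgapd : ∀ i, i < s → 1 + 2*(K+δ) + 2*(K+δ)/ε ≤ dist (Φ (t i)) (Φ (t (i+1))) := by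
    intro i hi
    have h1 := (hqg (t i) (hmem i (by omega)) (t (i+1)) (hmem (i+1) (by omega))).1
    have habs : |t i - t (i+1)| = t (i+1) - t i := by
      rw [abs_sub_comm, abs_of_nonneg (by linarith only [le_of_lt (hlt i hi)])]
    rw [habs] at h1
    have hR := hgap i hi
    have hmono : (1/L) * R ≤ (1/L) * (t (i+1) - t i) :=
      mul_le_mul_of_nonneg_left hR (by positivity)
    have hRL : (1/L) * R = A + 1 + 2*(K+δ) + 2*(K+δ)/ε := by
      rw [hRdef]; field_simp
    linarith only [h1, hmono, hRL]
  -- Gromov products of consecutive triples are bounded by K (Morse lemma)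
  have triple : ∀ k : ℕ, k + 2 ≤ s →
      QGP.gp (Φ (t (k+1))) (Φ (t k)) (Φ (t (k+2))) ≤ K := by
    intro k hk
    set T' := t (k+2) - t k with hT'def
    have hk0 : t k ∈ Icc (0:ℝ) T := hmem k (by omega)
    have hk2 : t (k+2) ∈ Icc (0:ℝ) T := hmem (k+2) (by omega)
    have ht01 : t k ≤ t (k+1) := le_of_lt (hlt k (by omega))
    have ht12 : t (k+1) ≤ t (k+2) := le_of_lt (hlt (k+1) (by omega))
    have hT'0 : 0 ≤ T' := by rw [hT'def]; linarith only [ht01, ht12]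
    have hsub : ∀ a ∈ Icc (0:ℝ) T', t k + a ∈ Icc (0:ℝ) T := by
      intro a ha
      constructor
      · linarith only [hk0.1, ha.1]
      · have h2 : a ≤ T' := ha.2
        rw [hT'def] at h2
        linarith only [h2, hk2.2]
    have hqg' : IsQuasiGeodesicOn L A T' (fun u => Φ (t k + u)) := by
      intro a ha b hb
      have := hqg (t k + a) (hsub a ha) (t k + b) (hsub b hb)
      have he : |t k + a - (t k + b)| = |a - b| := by
        rw [show t k + a - (t k + b) = a - b by ring]
      rw [he] at this
      exact this
    have happ := hK X hgeo hhyp T' (fun u => Φ (t k + u)) hT'0 hqg'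
      (t (k+1) - t k)
      ⟨by linarith only [ht01], by rw [hT'def]; linarith only [ht12]⟩
    have e1 : t k + (t (k+1) - t k) = t (k+1) := by ring
    have e2 : t k + (0:ℝ) = t k := by ring
    have e3 : t k + T' = t (k+2) := by rw [hT'def]; ring
    simp only [e1, e2, e3] at happ
    exact happ
  -- the inductive chain estimate
  have key : ∀ k : ℕ, k < s →
      QGP.gp (Φ (t k)) (Φ (t 0)) (Φ (t (k+1))) ≤ K + δ ∧
      (∑ i ∈ Finset.range (k+1), dist (Φ (t i)) (Φ (t (i+1))))
        ≤ dist (Φ (t 0)) (Φ (t (k+1))) + 2*(k:ℝ)*(K+δ) := by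
    intro k
    induction k with
    | zero =>
      intro _
      constructor
      · rw [QGP.gp_self_left]
        linarith only [hK0, hδ]
      · rw [Finset.sum_range_one]
        norm_num
    | succ k ih =>
      intro hk
      simp only [show k+1+1 = k+2 from rfl]
      obtain ⟨ihg, ihs⟩ := ih (by omega)
      have htrip := triple k (by omega)
      have hd_k := hgapd k (by omega)
      have h4 := QGP.hyp4 hhyp (Φ (t (k+1))) (Φ (t k)) (Φ (t 0)) (Φ (t (k+2)))
      have hid := QGP.gp_add_gp (Φ (t (k+1))) (Φ (t 0)) (Φ (t k))
      have hfirst : K + δ < QGP.gp (Φ (t (k+1))) (Φ (t k)) (Φ (t 0)) := by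
        rw [QGP.gp_comm]
        have hdc : dist (Φ (t (k+1))) (Φ (t k)) = dist (Φ (t k)) (Φ (t (k+1))) :=
          dist_comm _ _
        linarith only [hid, hdc, hd_k, ihg, hfrac, hKδ]
      have hGk1 : QGP.gp (Φ (t (k+1))) (Φ (t 0)) (Φ (t (k+2))) ≤ K + δ := by
        have hmin : min (QGP.gp (Φ (t (k+1))) (Φ (t k)) (Φ (t 0)))
            (QGP.gp (Φ (t (k+1))) (Φ (t 0)) (Φ (t (k+2)))) ≤ K + δ :=
          le_trans h4 (by linarith only [htrip])
        rcases min_le_iff.mp hmin with hc | hc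
        · exact absurd hc (not_le.mpr hfirst)
        · exact hc
      constructor
      · exact hGk1
      · rw [Finset.sum_range_succ]
        have hdist_id := QGP.dist_eq_gp (Φ (t (k+1))) (Φ (t 0)) (Φ (t (k+2)))
        have hc1 : dist (Φ (t (k+1))) (Φ (t 0)) = dist (Φ (t 0)) (Φ (t (k+1))) :=
          dist_comm _ _
        have hc2 : dist (Φ (t (k+1))) (Φ (t (k+2))) = dist (Φ (t (k+1))) (Φ (t (k+2))) := rfl
        push_cast
        linarith only [ihs, hdist_id, hc1, hGk1, hKδ]
  -- conclusion
  obtain ⟨s', rfl⟩ : ∃ s', s = s' + 1 := ⟨s - 1, by omega⟩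
  obtain ⟨-, hsum2⟩ := key s' (by omega)
  have hlowS : ∀ i ∈ Finset.range (s'+1), 2*(K+δ)/ε ≤ dist (Φ (t i)) (Φ (t (i+1))) := by
    intro i hi
    have := hgapd i (Finset.mem_range.mp hi)
    linarith only [this, hKδ]
  have hcard := Finset.card_nsmul_le_sum (Finset.range (s'+1))
    (fun i => dist (Φ (t i)) (Φ (t (i+1)))) (2*(K+δ)/ε) hlowS
  rw [Finset.card_range, nsmul_eq_mul] at hcard
  have hεsum : 2*((s':ℝ)+1)*(K+δ) ≤ ε * ∑ i ∈ Finset.range (s'+1), dist (Φ (t i)) (Φ (t (i+1))) := by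
    have hmul := mul_le_mul_of_nonneg_left hcard (le_of_lt hε)
    have heq : ε * (((s'+1:ℕ):ℝ) * (2*(K+δ)/ε)) = 2*((s':ℝ)+1)*(K+δ) := by
      push_cast
      field_simp
    rw [heq] at hmul
    exact hmul
  refine ⟨hsum1, ?_⟩
  rw [hΦ0, hΦT]
  have hs'c : 2*(s':ℝ)*(K+δ) ≤ 2*((s':ℝ)+1)*(K+δ) := by nlinarith [hKδ]
  nlinarith [hsum2, hεsum, hs'c]
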